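/- For all a, b ∈ ℝ with |a| ≤ 2 and |b| ≤ 2 the inequality (1 + cos a)(1 + cos b) ≥ 2 + 2·cos(√(a² + b²)) holds, with equality only if a = 0 or b = 0. -/

import Mathlib

open Real Set

private lemma sin_sub_mul_cos_pos {u : ℝ} (hu : 0 < u) (hu2 : u < 2) :
    0 < Real.sin u - u * Real.cos u := by
  rcases lt_or_ge u (π / 2) with h | h
  · have hc : 0 < Real.cos u := Real.cos_pos_of_mem_Ioo ⟨by linarith [Real.pi_pos], h⟩
    have ht := Real.lt_tan hu h
    rw [Real.tan_eq_sin_div_cos] at ht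
    have := (lt_div_iff₀ hc).mp ht
    linarith
  · have hc : Real.cos u ≤ 0 := Real.cos_nonpos_of_pi_div_two_le_of_le h (by nlinarith [Real.pi_gt_three])
    have hs : 0 < Real.sin u := Real.sin_pos_of_pos_of_lt_pi hu (by nlinarith [Real.pi_gt_three])
    nlinarith

private lemma cos_sqrt_strictConvex :
    StrictConvexOn ℝ (Icc (0:ℝ) 4) (fun t => Real.cos (Real.sqrt t)) := by
  have hcont : ContinuousOn (fun t => Real.cos (Real.sqrt t)) (Icc (0:ℝ) 4) :=
    (Real.continuous_cos.comp Real.continuous_sqrt).continuousOn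
  apply strictConvexOn_of_deriv2_pos (convex_Icc 0 4) hcont
  intro t ht
  rw [interior_Icc] at ht
  obtain ⟨ht0, ht4⟩ := ht
  set u := Real.sqrt t with hu
  have hu0 : 0 < u := Real.sqrt_pos.mpr ht0
  have hu2 : u < 2 := by
    rw [hu, show (2:ℝ) = Real.sqrt 4 by rw [show (4:ℝ) = 2^2 by norm_num, Real.sqrt_sq]; norm_num]
    exact Real.sqrt_lt_sqrt ht0.le ht4
  -- first derivative on Ioi 0
  have hd1 : ∀ s ∈ Ioi (0:ℝ), HasDerivAt (fun t => Real.cos (Real.sqrt t))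
      (-Real.sin (Real.sqrt s) / (2 * Real.sqrt s)) s := by
    intro s hs
    have hs0 : (0:ℝ) < s := hs
    have h1 := Real.hasDerivAt_sqrt hs0.ne'
    have h2 : HasDerivAt (fun t => Real.cos (Real.sqrt t)) (-Real.sin (Real.sqrt s) * (1 / (2 * Real.sqrt s))) s :=
      (Real.hasDerivAt_cos (Real.sqrt s)).comp s h1
    convert h2 using 1
    ring
  have heq : ∀ s ∈ Ioi (0:ℝ), deriv (fun t => Real.cos (Real.sqrt t)) s
      = -Real.sin (Real.sqrt s) / (2 * Real.sqrt s) := fun s hs => (hd1 s hs).deriv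
  have hev : deriv (fun t => Real.cos (Real.sqrt t))
      =ᶠ[nhds t] (fun s => -Real.sin (Real.sqrt s) / (2 * Real.sqrt s)) :=
    Filter.eventuallyEq_of_mem (isOpen_Ioi.mem_nhds ht0) heq
  have h2d : HasDerivAt (fun s => -Real.sin (Real.sqrt s) / (2 * Real.sqrt s))
      (((-Real.cos u * (1 / (2 * u))) * (2 * u) - (-Real.sin u) * (2 * (1 / (2 * u)))) / (2 * u)^2) t := by
    have hsq := Real.hasDerivAt_sqrt ht0.ne'
    have hnum : HasDerivAt (fun s => -Real.sin (Real.sqrt s)) (-Real.cos u * (1 / (2 * u))) t := by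
      have : HasDerivAt (fun s => -Real.sin (Real.sqrt s)) (-(Real.cos u * (1 / (2 * u)))) t :=
        ((Real.hasDerivAt_sin (Real.sqrt t)).comp t hsq).neg
      convert this using 1
      ring
    have hden : HasDerivAt (fun s => 2 * Real.sqrt s) (2 * (1 / (2 * u))) t :=
      hsq.const_mul 2
    exact hnum.div hden (by positivity)
  have hderiv2 : deriv^[2] (fun t => Real.cos (Real.sqrt t)) t
      = ((-Real.cos u * (1 / (2 * u))) * (2 * u) - (-Real.sin u) * (2 * (1 / (2 * u)))) / (2 * u)^2 := by
    simp only [Function.iterate_succ, Function.iterate_zero, Function.comp_apply, id]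
    rw [hev.deriv_eq]
    exact h2d.deriv
  rw [hderiv2]
  have key := sin_sub_mul_cos_pos hu0 hu2
  have hexpr : ((-Real.cos u * (1 / (2 * u))) * (2 * u) - (-Real.sin u) * (2 * (1 / (2 * u)))) / (2 * u)^2
      = (Real.sin u - u * Real.cos u) / (u^3 * 4) := by
    field_simp
    ring
  rw [hexpr]
  positivity

private lemma cos_mul_cos_ge {x y : ℝ} (hx : |x| ≤ 1) (hy : |y| ≤ 1) :
    Real.cos x * Real.cos y ≥ Real.cos (Real.sqrt (x^2 + y^2)) ∧
    (x ≠ 0 → y ≠ 0 → Real.cos x * Real.cos y > Real.cos (Real.sqrt (x^2 + y^2))) := by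
  have habs := abs_le.mp hx
  have habs' := abs_le.mp hy
  have hmem1 : (x + y)^2 ∈ Icc (0:ℝ) 4 := ⟨sq_nonneg _, by nlinarith⟩
  have hmem2 : (x - y)^2 ∈ Icc (0:ℝ) 4 := ⟨sq_nonneg _, by nlinarith⟩
  have hprod : Real.cos x * Real.cos y
      = (Real.cos (Real.sqrt ((x+y)^2)) + Real.cos (Real.sqrt ((x-y)^2))) / 2 := by
    rw [Real.sqrt_sq_eq_abs, Real.sqrt_sq_eq_abs, Real.cos_abs, Real.cos_abs,
      Real.cos_add, Real.cos_sub]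
    ring
  have hmid : ((1:ℝ)/2) • ((x+y)^2) + ((1:ℝ)/2) • ((x-y)^2) = x^2 + y^2 := by
    simp only [smul_eq_mul]; ring
  constructor
  · have := cos_sqrt_strictConvex.convexOn.2 hmem1 hmem2 (by norm_num : (0:ℝ) ≤ 1/2)
      (by norm_num : (0:ℝ) ≤ 1/2) (by norm_num)
    rw [hmid] at this
    simp only [smul_eq_mul] at this
    rw [hprod]; linarith
  · intro hx0 hy0
    have hne : (x + y)^2 ≠ (x - y)^2 := by
      intro h
      have : 4 * (x * y) = 0 := by nlinarith [h]
      rcases mul_eq_zero.mp (by linarith : x * y = 0) with h | h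
      · exact hx0 h
      · exact hy0 h
    have := cos_sqrt_strictConvex.2 hmem1 hmem2 hne (by norm_num : (0:ℝ) < 1/2)
      (by norm_num : (0:ℝ) < 1/2) (by norm_num)
    rw [hmid] at this
    simp only [smul_eq_mul] at this
    rw [hprod]; linarith

theorem one_add_cos_mul_one_add_cos (a b : ℝ) (ha : |a| ≤ 2) (hb : |b| ≤ 2) :
    (1 + cos a) * (1 + cos b) ≥ 2 + 2 * cos (Real.sqrt (a ^ 2 + b ^ 2)) ∧
    ((1 + cos a) * (1 + cos b) = 2 + 2 * cos (Real.sqrt (a ^ 2 + b ^ 2)) → a = 0 ∨ b = 0) := by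
  have hx : |a/2| ≤ 1 := by rw [abs_div]; simp only [abs_two]; linarith [abs_le.mp ha]
  have hy : |b/2| ≤ 1 := by rw [abs_div]; simp only [abs_two]; linarith [abs_le.mp hb]
  have hx' : |a/2| ≤ 1 := hx
  obtain ⟨hge, hstrict⟩ := cos_mul_cos_ge hx hy
  -- rewrite both sides as squares
  have h1 : 1 + Real.cos a = 2 * Real.cos (a/2)^2 := by
    have := Real.cos_sq (a/2)
    rw [show 2 * (a/2) = a by ring] at this
    linarith
  have h2 : 1 + Real.cos b = 2 * Real.cos (b/2)^2 := by
    have := Real.cos_sq (b/2)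
    rw [show 2 * (b/2) = b by ring] at this
    linarith
  set c := Real.sqrt (a^2 + b^2) with hc
  have hcnn : 0 ≤ c := Real.sqrt_nonneg _
  have h3 : 2 + 2 * Real.cos c = 4 * Real.cos (c/2)^2 := by
    have := Real.cos_sq (c/2)
    rw [show 2 * (c/2) = c by ring] at this
    linarith
  have hhalf : Real.sqrt ((a/2)^2 + (b/2)^2) = c / 2 := by
    rw [show (a/2)^2 + (b/2)^2 = (a^2+b^2)/4 by ring, hc, Real.sqrt_div (by positivity) 4,
      show Real.sqrt 4 = 2 by rw [show (4:ℝ) = 2^2 by norm_num, Real.sqrt_sq]; norm_num]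
  rw [hhalf] at hge hstrict
  have hca : 0 ≤ Real.cos (a/2) := by
    apply Real.cos_nonneg_of_mem_Icc
    constructor <;> [nlinarith [abs_le.mp hx, Real.pi_gt_three]; nlinarith [abs_le.mp hx, Real.pi_gt_three]]
  have hcb : 0 ≤ Real.cos (b/2) := by
    apply Real.cos_nonneg_of_mem_Icc
    constructor <;> [nlinarith [abs_le.mp hy, Real.pi_gt_three]; nlinarith [abs_le.mp hy, Real.pi_gt_three]]
  have hc3 : c < 3 := by
    have h8 : a^2 + b^2 < 9 := by nlinarith [abs_le.mp ha, abs_le.mp hb]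
    calc c < Real.sqrt 9 := Real.sqrt_lt_sqrt (by positivity) h8
    _ = 3 := by rw [show (9:ℝ) = 3^2 by norm_num, Real.sqrt_sq]; norm_num
  have hcc : 0 ≤ Real.cos (c/2) := by
    apply Real.cos_nonneg_of_mem_Icc
    constructor <;> nlinarith [Real.pi_gt_three]
  set u := Real.cos (a/2) * Real.cos (b/2) with hu
  set v := Real.cos (c/2) with hv
  have huv : v ≤ u := hge
  have hunn : 0 ≤ u := mul_nonneg hca hcb
  have hid : 2 * Real.cos (a/2)^2 * (2 * Real.cos (b/2)^2) = 4 * u^2 := by rw [hu]; ring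
  have hsq : v^2 ≤ u^2 := pow_le_pow_left₀ hcc huv 2
  constructor
  · rw [h1, h2, h3, hid]
    linarith
  · intro heqn
    by_contra hcon
    push_neg at hcon
    obtain ⟨ha0, hb0⟩ := hcon
    have hlt : v < u := hstrict (by simpa using ha0) (by simpa using hb0)
    rw [h1, h2, h3, hid] at heqn
    have h4 : u^2 = v^2 := by linarith
    have h5 : v^2 < u^2 := by
      rw [sq, sq]; exact mul_self_lt_mul_self hcc hlt
    linarith
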